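/- The antisymmetrized ghost derivative H_{μν} := ∂_μ C_ν − ∂_ν C_μ is γ₀-closed, and every second or higher derivative of the ghost is γ₀-exact: ∂_ρ∂_{σ₁}…∂_{σ_s} C_μ with s ≥ 1 lies in the image of γ₀ acting on the algebra generated by h and its derivatives. -/

import Mathlib

/-- Generator symbols ∂_{ρ₁…ρ_s} h_{μν}: a multiset of derivative indices
(derivatives commute) together with the two symmetric-tensor indices. -/
abbrev HGen (n : ℕ) := Multiset (Fin n) × Fin n × Fin n

/-- Generator symbols ∂_{ρ₁…ρ_s} C_μ for the diffeomorphism ghost. -/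
abbrev CGen (n : ℕ) := Multiset (Fin n) × Fin n

/-- The ℝ-linear span of the generators h, C and their derivatives. Since γ₀ is
extended to the free graded-commutative algebra as an odd derivation commuting
with ∂, its square γ₀² is an (even) derivation, and hence γ₀² = 0 on the whole
algebra iff γ₀² vanishes on this span of generators. -/
abbrev GenSpan (n : ℕ) := (HGen n ⊕ CGen n) →₀ ℝ

/-- The linearized BRST differential γ₀ on generators:
γ₀ ∂_D h_{μν} = ∂_D ∂_μ C_ν + ∂_D ∂_ν C_μ and γ₀ ∂_D C_μ = 0,
extended ℝ-linearly. -/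
noncomputable def gammaZero (n : ℕ) : GenSpan n →ₗ[ℝ] GenSpan n :=
  Finsupp.lsum ℝ fun g =>
    match g with
    | Sum.inl (D, μ, ν) =>
        LinearMap.toSpanSingleton ℝ (GenSpan n)
          (Finsupp.single (Sum.inr (μ ::ₘ D, ν)) 1 + Finsupp.single (Sum.inr (ν ::ₘ D, μ)) 1)
    | Sum.inr _ => 0

/-- The antisymmetrized ghost derivative H_{μν} = ∂_μ C_ν − ∂_ν C_μ. -/
noncomputable def Hghost {n : ℕ} (μ ν : Fin n) : GenSpan n :=
  Finsupp.single (Sum.inr ({μ}, ν)) 1 - Finsupp.single (Sum.inr ({ν}, μ)) 1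

/-- H_{μν} = ∂_μC_ν − ∂_νC_μ is γ₀-closed, and every second or
higher derivative of the ghost, ∂_{ρ₁…ρ_s}∂_ρ C_μ with s ≥ 1, is γ₀-exact
(e.g. ∂_σ∂_ρ C_μ = γ₀ Γ_{σρμ} with Γ_{σρμ} = (1/2)(∂_σh_{ρμ} + ∂_ρh_{σμ} − ∂_μh_{σρ})). -/
theorem Hghost_closed_and_higher_derivatives_exact (n : ℕ) :
    (∀ μ ν : Fin n, gammaZero n (Hghost μ ν) = 0) ∧
    (∀ (D : Multiset (Fin n)) (μ : Fin n), 2 ≤ Multiset.card D →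
      (Finsupp.single (Sum.inr (D, μ)) (1 : ℝ) : GenSpan n) ∈
        LinearMap.range (gammaZero n)) := by
  constructor
  · intro μ ν
    rw [Hghost, map_sub]
    simp [gammaZero, Finsupp.lsum_single]
  · rintro D μ hD
    obtain ⟨σ, hσ⟩ := Multiset.card_pos_iff_exists_mem.mp (show 0 < Multiset.card D by omega)
    obtain ⟨D1, rfl⟩ := Multiset.exists_cons_of_mem hσ
    obtain ⟨ρ, hρ⟩ := Multiset.card_pos_iff_exists_mem.mp
      (show 0 < Multiset.card D1 by simp at hD; omega)
    obtain ⟨D2, rfl⟩ := Multiset.exists_cons_of_mem hρ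
    refine ⟨(1/2 : ℝ) • (Finsupp.single (Sum.inl (ρ ::ₘ D2, σ, μ)) 1
        + Finsupp.single (Sum.inl (σ ::ₘ D2, ρ, μ)) 1
        - Finsupp.single (Sum.inl (μ ::ₘ D2, σ, ρ)) 1), ?_⟩
    simp only [map_smul, map_add, map_sub, gammaZero, Finsupp.lsum_single,
      LinearMap.toSpanSingleton_apply, one_smul]
    rw [show ρ ::ₘ σ ::ₘ D2 = σ ::ₘ ρ ::ₘ D2 from Multiset.cons_swap ρ σ D2,
      show μ ::ₘ ρ ::ₘ D2 = ρ ::ₘ μ ::ₘ D2 from Multiset.cons_swap μ ρ D2,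
      show μ ::ₘ σ ::ₘ D2 = σ ::ₘ μ ::ₘ D2 from Multiset.cons_swap μ σ D2]
    module
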